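/- Every almost inner derivation of the Lie algebra n_n(K) of strictly upper-triangular n×n matrices over a field K is inner: AID(n_n(K)) = Inn(n_n(K)) for all n ≥ 2. -/

import Mathlib

attribute [local instance 100] LieRing.ofAssociativeRing

/-- The Lie algebra `n_n(K)` of strictly upper triangular `n × n` matrices,
with bracket `⁅A, B⁆ = A * B - B * A`. -/
def strictlyUpperTriangular (K : Type*) [Field K] (n : ℕ) :
    LieSubalgebra K (Matrix (Fin n) (Fin n) K) where
  carrier := {M | ∀ i j : Fin n, j ≤ i → M i j = 0}
  add_mem' := by
    intro A B hA hB i j h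
    show A i j + B i j = 0
    rw [hA i j h, hB i j h, add_zero]
  zero_mem' := by intro i j _; rfl
  smul_mem' := by
    intro c A hA i j h
    show c * A i j = 0
    rw [hA i j h, mul_zero]
  lie_mem' := by
    intro A B hA hB
    have key : ∀ X Y : Matrix (Fin n) (Fin n) K,
        (∀ i j : Fin n, j ≤ i → X i j = 0) → (∀ i j : Fin n, j ≤ i → Y i j = 0) →
        ∀ i j : Fin n, j ≤ i → (X * Y) i j = 0 := by
      intro X Y hX hY i j h
      rw [Matrix.mul_apply]
      apply Finset.sum_eq_zero
      intro k _
      rcases le_or_gt k i with hk | hk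
      · rw [hX i k hk, zero_mul]
      · rw [hY k j (le_of_lt (lt_of_le_of_lt h hk)), mul_zero]
    intro i j h
    show (A * B - B * A) i j = 0
    rw [Matrix.sub_apply, key A B hA hB i j h, key B A hB hA i j h, sub_zero]

section Aux

variable {K : Type*} [Field K] {n : ℕ}

/-- elementary matrix -/
def ebM (K : Type*) [Field K] {n : ℕ} (a b : Fin n) : Matrix (Fin n) (Fin n) K :=
  fun k l => if k = a ∧ l = b then 1 else 0

lemma lie_ebM (Z : Matrix (Fin n) (Fin n) K) (a b k l : Fin n) :
    (Z * ebM K a b - ebM K a b * Z) k l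
      = (if l = b then Z k a else 0) - (if k = a then Z b l else 0) := by
  have h1 : (Z * ebM K a b) k l = if l = b then Z k a else 0 := by
    rw [Matrix.mul_apply]
    rcases eq_or_ne l b with rfl | hl
    · rw [if_pos rfl, Finset.sum_eq_single a]
      · simp [ebM]
      · intro m _ hm; simp [ebM, hm]
      · simp
    · rw [if_neg hl]
      apply Finset.sum_eq_zero; intro m _; simp [ebM, hl]
  have h2 : (ebM K a b * Z) k l = if k = a then Z b l else 0 := by
    rw [Matrix.mul_apply]
    rcases eq_or_ne k a with rfl | hk
    · rw [if_pos rfl, Finset.sum_eq_single b]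
      · simp [ebM]
      · intro m _ hm; simp [ebM, hm]
      · simp
    · rw [if_neg hk]
      apply Finset.sum_eq_zero; intro m _; simp [ebM, hk]
  rw [Matrix.sub_apply, h1, h2]

lemma ebM_mem {a b : Fin n} (h : a < b) : ebM K a b ∈ strictlyUpperTriangular K n := by
  intro i j hij
  show (if i = a ∧ j = b then (1:K) else 0) = 0
  rw [if_neg]; rintro ⟨rfl, rfl⟩; exact absurd h (not_lt.mpr hij)

def gen (K : Type*) [Field K] {n : ℕ} (a b : Fin n) (h : a < b) :
    strictlyUpperTriangular K n := ⟨ebM K a b, ebM_mem h⟩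

@[simp] lemma gen_coe {a b : Fin n} (h : a < b) :
    ((gen K a b h : strictlyUpperTriangular K n) : Matrix (Fin n) (Fin n) K) = ebM K a b := rfl

def Ycand {K : Type*} [Field K] {n : ℕ}
    (D : LieDerivation K (strictlyUpperTriangular K n) (strictlyUpperTriangular K n)) :
    Matrix (Fin n) (Fin n) K := fun r c =>
  if hrc : r < c then
    if hc : (c : ℕ) + 1 < n then
      (↑(D (gen K c ⟨(c:ℕ)+1, hc⟩ (by simp [Fin.lt_def]))) : Matrix (Fin n) (Fin n) K)
        r ⟨(c:ℕ)+1, hc⟩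
    else if hr : 0 < (r : ℕ) then
      -((↑(D (gen K ⟨(r:ℕ)-1, lt_of_le_of_lt (Nat.sub_le _ _) r.isLt⟩ r
          (Fin.lt_def.mpr (Nat.sub_lt hr Nat.one_pos)))) : Matrix (Fin n) (Fin n) K)
          ⟨(r:ℕ)-1, lt_of_le_of_lt (Nat.sub_le _ _) r.isLt⟩ c)
    else 0
  else 0

lemma Ycand_zero (D : LieDerivation K (strictlyUpperTriangular K n) (strictlyUpperTriangular K n))
    {r c : Fin n} (h : ¬ r < c) : Ycand D r c = 0 := by
  simp only [Ycand]; rw [dif_neg h]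

lemma Ycand_col (D : LieDerivation K (strictlyUpperTriangular K n) (strictlyUpperTriangular K n))
    {r c b : Fin n} (hrc : r < c) (hb : (b:ℕ) = (c:ℕ)+1) (hcb : c < b) :
    Ycand D r c = (↑(D (gen K c b hcb)) : Matrix (Fin n) (Fin n) K) r b := by
  have hcn : (c:ℕ)+1 < n := hb ▸ b.isLt
  have hbb : b = ⟨(c:ℕ)+1, hcn⟩ := Fin.ext hb
  subst hbb
  simp only [Ycand]
  rw [dif_pos hrc, dif_pos hcn]

lemma Ycand_row (D : LieDerivation K (strictlyUpperTriangular K n) (strictlyUpperTriangular K n))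
    {r c a : Fin n} (hrc : r < c) (hc : ¬((c:ℕ)+1 < n)) (ha : (a:ℕ)+1 = (r:ℕ)) (har : a < r) :
    Ycand D r c = -((↑(D (gen K a r har)) : Matrix (Fin n) (Fin n) K) a c) := by
  have h2 : ((r:ℕ)-1) < n := lt_of_le_of_lt (Nat.sub_le _ _) r.isLt
  have haa : a = ⟨(r:ℕ)-1, h2⟩ := Fin.ext (show (a:ℕ) = (r:ℕ)-1 by omega)
  have hr : 0 < (r:ℕ) := by omega
  subst haa
  simp only [Ycand]
  rw [dif_pos hrc, dif_neg hc, dif_pos hr]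

end Aux

/-- Every almost inner derivation of `n_n(K)` is inner, for `n ≥ 2`. -/
theorem stmt18 {K : Type*} [Field K] (n : ℕ) (hn : 2 ≤ n)
    (D : LieDerivation K (strictlyUpperTriangular K n) (strictlyUpperTriangular K n))
    (hD : ∀ X : strictlyUpperTriangular K n, ∃ Y : strictlyUpperTriangular K n,
      D X = ⁅Y, X⁆) :
    ∃ Y : strictlyUpperTriangular K n, ∀ X : strictlyUpperTriangular K n,
      D X = ⁅Y, X⁆ := by
  classical
  have hmem : ∀ (Z : strictlyUpperTriangular K n) (i j : Fin n), j ≤ i →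
      (↑Z : Matrix (Fin n) (Fin n) K) i j = 0 := fun Z => Z.2
  -- structure of D on elementary matrices
  have hstruct : ∀ (a b : Fin n) (h : a < b), ∃ W : strictlyUpperTriangular K n,
      ∀ k l : Fin n, (↑(D (gen K a b h)) : Matrix (Fin n) (Fin n) K) k l
        = (if l = b then (↑W : Matrix (Fin n) (Fin n) K) k a else 0)
          - (if k = a then (↑W : Matrix (Fin n) (Fin n) K) b l else 0) := by
    intro a b h
    obtain ⟨W, hW⟩ := hD (gen K a b h)
    refine ⟨W, fun k l => ?_⟩
    have h2 : (↑(D (gen K a b h)) : Matrix (Fin n) (Fin n) K)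
        = (W : Matrix (Fin n) (Fin n) K) * ebM K a b
          - ebM K a b * (W : Matrix (Fin n) (Fin n) K) := by
      rw [hW, LieSubalgebra.coe_bracket, Ring.lie_def]; rfl
    rw [h2, lie_ebM]

  -- bracket entries against an elementary matrix
  have hbrk : ∀ (Z X : strictlyUpperTriangular K n) (a b : Fin n),
      (X : Matrix (Fin n) (Fin n) K) = ebM K a b →
      ∀ k l : Fin n, (↑⁅Z, X⁆ : Matrix (Fin n) (Fin n) K) k l
        = (if l = b then (Z : Matrix (Fin n) (Fin n) K) k a else 0)
          - (if k = a then (Z : Matrix (Fin n) (Fin n) K) b l else 0) := by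
    intro Z X a b hX k l
    have h2 : (↑⁅Z, X⁆ : Matrix (Fin n) (Fin n) K)
        = (Z : Matrix (Fin n) (Fin n) K) * ebM K a b
          - ebM K a b * (Z : Matrix (Fin n) (Fin n) K) := by
      rw [LieSubalgebra.coe_bracket, Ring.lie_def, hX]
    rw [h2, lie_ebM]
  -- consistency of the overlapping constraints
  have hcons : ∀ (a b c d : Fin n) (hab : a < b) (hcd : c < d), b < c →
      (↑(D (gen K c d hcd)) : Matrix (Fin n) (Fin n) K) b d
        + (↑(D (gen K a b hab)) : Matrix (Fin n) (Fin n) K) a c = 0 := by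
    intro a b c d hab hcd hbc
    have hac : a < c := lt_trans hab hbc
    have hbd : b < d := lt_trans hbc hcd
    obtain ⟨Z, hZ⟩ := hD (gen K a b hab + gen K c d hcd)
    obtain ⟨W1, hW1⟩ := hstruct a b hab
    obtain ⟨W2, hW2⟩ := hstruct c d hcd
    have key : ∀ k l : Fin n,
        (↑(D (gen K a b hab)) : Matrix (Fin n) (Fin n) K) k l
          + (↑(D (gen K c d hcd)) : Matrix (Fin n) (Fin n) K) k l
        = ((if l = b then (Z : Matrix (Fin n) (Fin n) K) k a else 0)
            - (if k = a then (Z : Matrix (Fin n) (Fin n) K) b l else 0))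
          + ((if l = d then (Z : Matrix (Fin n) (Fin n) K) k c else 0)
            - (if k = c then (Z : Matrix (Fin n) (Fin n) K) d l else 0)) := by
      intro k l
      have e1 : (↑(D (gen K a b hab)) : Matrix (Fin n) (Fin n) K)
          + (↑(D (gen K c d hcd)) : Matrix (Fin n) (Fin n) K)
          = ((Z : Matrix (Fin n) (Fin n) K) * ebM K a b
              - ebM K a b * (Z : Matrix (Fin n) (Fin n) K))
            + ((Z : Matrix (Fin n) (Fin n) K) * ebM K c d
              - ebM K c d * (Z : Matrix (Fin n) (Fin n) K)) := by
        have h0 : D (gen K a b hab) + D (gen K c d hcd)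
            = ⁅Z, gen K a b hab + gen K c d hcd⁆ := by
          rw [← map_add]; exact hZ
        have h1 := congrArg
          (fun (X : strictlyUpperTriangular K n) => (X : Matrix (Fin n) (Fin n) K)) h0
        simp only [LieSubalgebra.coe_bracket, Ring.lie_def] at h1
        rw [show ((gen K a b hab + gen K c d hcd : strictlyUpperTriangular K n) :
            Matrix (Fin n) (Fin n) K) = ebM K a b + ebM K c d from rfl] at h1
        rw [show (↑(D (gen K a b hab) + D (gen K c d hcd)) : Matrix (Fin n) (Fin n) K)
            = (↑(D (gen K a b hab)) : Matrix (Fin n) (Fin n) K)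
              + (↑(D (gen K c d hcd)) : Matrix (Fin n) (Fin n) K) from rfl] at h1
        rw [h1]; noncomm_ring
      have e2 := congrFun (congrFun e1 k) l
      simp only [Matrix.add_apply] at e2
      rw [lie_ebM, lie_ebM] at e2
      exact e2
    have h1 : c ≠ d := ne_of_lt hcd
    have h2 : a ≠ c := ne_of_lt hac
    have h3 : c ≠ b := ne_of_gt hbc
    have h4 : d ≠ b := ne_of_gt hbd
    have h5 : b ≠ a := ne_of_gt hab
    have h6 : b ≠ c := ne_of_lt hbc
    have e_ac : (↑(D (gen K a b hab)) : Matrix (Fin n) (Fin n) K) a c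
        = -(Z : Matrix (Fin n) (Fin n) K) b c := by
      have k1 := key a c
      rw [hW2 a c] at k1
      simp only [if_neg h1, if_neg h2, if_neg h3, eq_self_iff_true, if_true, sub_zero,
        zero_sub, add_zero] at k1
      linear_combination k1
    have e_bd : (↑(D (gen K c d hcd)) : Matrix (Fin n) (Fin n) K) b d
        = (Z : Matrix (Fin n) (Fin n) K) b c := by
      have k2 := key b d
      rw [hW1 b d] at k2
      simp only [if_neg h4, if_neg h5, if_neg h6, eq_self_iff_true, if_true, sub_zero,
        zero_add, zero_sub, neg_zero] at k2
      linear_combination k2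
    rw [e_ac, e_bd]; ring
  -- the candidate matrix
  have hYmem : Ycand D ∈ strictlyUpperTriangular K n := by
    intro i j hij
    exact Ycand_zero D (not_lt.mpr hij)
  set Y : strictlyUpperTriangular K n := ⟨Ycand D, hYmem⟩ with hYdef
  have hYcoe : (Y : Matrix (Fin n) (Fin n) K) = Ycand D := rfl
  -- D agrees with ad Y on the generators
  have hgen1 : ∀ (a b : Fin n) (h : a < b), (b:ℕ) = (a:ℕ) + 1 →
      D (gen K a b h) = ⁅Y, gen K a b h⁆ := by
    intro a b h hb
    obtain ⟨W, hW⟩ := hstruct a b h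
    apply Subtype.ext
    funext k l
    rw [hW k l, hbrk Y (gen K a b h) a b rfl k l, hYcoe]
    by_cases hl : l = b
    · subst hl
      by_cases hk : k = a
      · subst hk
        rw [hmem W k k le_rfl, hmem W l l le_rfl,
          Ycand_zero D (lt_irrefl k), Ycand_zero D (lt_irrefl l)]
      · rw [if_pos rfl, if_pos rfl, if_neg hk, if_neg hk, sub_zero, sub_zero]
        by_cases hka : k < a
        · rw [Ycand_col D hka hb h, hW k l, if_pos rfl, if_neg hk, sub_zero]
        · rw [Ycand_zero D hka, hmem W k a (not_lt.mp hka)]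
    · by_cases hk : k = a
      · subst hk
        rw [if_neg hl, if_neg hl, if_pos rfl, if_pos rfl, zero_sub, zero_sub, neg_inj]
        by_cases hbl : b < l
        · by_cases hln : (l:ℕ)+1 < n
          · have hll : l < (⟨(l:ℕ)+1, hln⟩ : Fin n) := Fin.lt_def.mpr (Nat.lt_succ_self _)
            rw [Ycand_col D hbl rfl hll]
            have hc := hcons k b l ⟨(l:ℕ)+1, hln⟩ h hll hbl
            have hDkl := hW k l
            rw [if_neg hl, if_pos rfl, zero_sub] at hDkl
            rw [hDkl] at hc
            linear_combination -hc
          · have hc := Ycand_row D hbl hln hb.symm h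
            rw [hc]
            have hDkl := hW k l
            rw [if_neg hl, if_pos rfl, zero_sub] at hDkl
            rw [hDkl, neg_neg]
        · rw [Ycand_zero D hbl, hmem W b l (not_lt.mp hbl)]
      · rw [if_neg hl, if_neg hl, if_neg hk, if_neg hk]
  -- the submodule where D equals ad Y
  let S : Submodule K ↥(strictlyUpperTriangular K n) :=
    { carrier := {X | D X = ⁅Y, X⁆}
      add_mem' := by
        intro u v hu hv
        simp only [Set.mem_setOf_eq] at *
        rw [map_add, hu, hv, lie_add]
      zero_mem' := by simp only [Set.mem_setOf_eq, map_zero, lie_zero]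
      smul_mem' := by
        intro c u hu
        simp only [Set.mem_setOf_eq] at *
        rw [map_smul, hu, lie_smul] }
  have hS : ∀ X : strictlyUpperTriangular K n, X ∈ S → D X = ⁅Y, X⁆ := fun X hX => hX
  have hSbrack : ∀ u v : strictlyUpperTriangular K n, u ∈ S → v ∈ S → ⁅u, v⁆ ∈ S := by
    intro u v hu hv
    have hu' : D u = ⁅Y, u⁆ := hu
    have hv' : D v = ⁅Y, v⁆ := hv
    show D ⁅u, v⁆ = ⁅Y, ⁅u, v⁆⁆
    rw [LieDerivation.apply_lie_eq_add, hu', hv', leibniz_lie, ← lie_skew u Y, neg_lie]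
    abel
  -- all elementary matrices are in S
  have hgenAll : ∀ (m : ℕ) (a b : Fin n) (h : a < b), (b:ℕ) - (a:ℕ) ≤ m →
      gen K a b h ∈ S := by
    intro m
    induction m with
    | zero =>
      intro a b h hm
      exact absurd hm (by have := Fin.lt_def.mp h; omega)
    | succ m ih =>
      intro a b h hm
      by_cases hb : (b:ℕ) = (a:ℕ) + 1
      · exact hgen1 a b h hb
      · have h2 : (a:ℕ) + 1 < (b:ℕ) := by have := Fin.lt_def.mp h; omega
        have hcn : (a:ℕ) + 1 < n := lt_trans h2 b.isLt
        have h1 : a < (⟨(a:ℕ)+1, hcn⟩ : Fin n) := Fin.lt_def.mpr (Nat.lt_succ_self _)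
        have h3 : (⟨(a:ℕ)+1, hcn⟩ : Fin n) < b := Fin.lt_def.mpr h2
        have hsplit : gen K a b h = ⁅gen K a ⟨(a:ℕ)+1, hcn⟩ h1, gen K ⟨(a:ℕ)+1, hcn⟩ b h3⁆ := by
          apply Subtype.ext
          funext k l
          rw [hbrk (gen K a ⟨(a:ℕ)+1, hcn⟩ h1) (gen K ⟨(a:ℕ)+1, hcn⟩ b h3)
            (⟨(a:ℕ)+1, hcn⟩ : Fin n) b rfl k l]
          have hba : ¬(b = a) := ne_of_gt h
          show (if k = a ∧ l = b then (1:K) else 0) = _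
          simp only [gen_coe, ebM, hba, false_and, if_false, sub_zero]
          by_cases hl : l = b
          · by_cases hk : k = a <;> simp [hl, hk]
          · simp [hl]
        rw [hsplit]
        refine hSbrack _ _ (ih a ⟨(a:ℕ)+1, hcn⟩ h1 ?_) (ih ⟨(a:ℕ)+1, hcn⟩ b h3 ?_)
        · show (a:ℕ) + 1 - (a:ℕ) ≤ m
          omega
        · show (b:ℕ) - ((a:ℕ) + 1) ≤ m
          omega
  -- every element is a combination of elementary matrices
  have hspan : ∀ X : strictlyUpperTriangular K n, X ∈ S := by
    intro X
    have hX : X = ∑ a : Fin n, ∑ b : Fin n, (↑X : Matrix (Fin n) (Fin n) K) a b •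
        (if h : a < b then gen K a b h else 0) := by
      apply Subtype.ext
      rw [show ((∑ a : Fin n, ∑ b : Fin n, (↑X : Matrix (Fin n) (Fin n) K) a b •
          (if h : a < b then gen K a b h else 0) : strictlyUpperTriangular K n) :
          Matrix (Fin n) (Fin n) K)
        = ∑ a : Fin n, ∑ b : Fin n, (↑X : Matrix (Fin n) (Fin n) K) a b •
          (if h : a < b then ebM K a b else 0) from ?_]
      · funext k l
        simp only [Matrix.sum_apply, Matrix.smul_apply, smul_eq_mul]
        rw [Finset.sum_eq_single k]
        · rw [Finset.sum_eq_single l]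
          · by_cases hkl : k < l
            · simp [hkl, ebM]
            · simp only [dif_neg hkl, Matrix.zero_apply, mul_zero]
              exact hmem X k l (not_lt.mp hkl)
          · intro b _ hb
            by_cases hkb : k < b
            · simp [dif_pos hkb, ebM, Ne.symm hb]
            · simp [dif_neg hkb]
          · intro hk; exact absurd (Finset.mem_univ l) hk
        · intro a _ ha
          apply Finset.sum_eq_zero
          intro b _
          by_cases hab : a < b
          · simp [dif_pos hab, ebM, Ne.symm ha]
          · simp [dif_neg hab]
        · intro hk; exact absurd (Finset.mem_univ k) hk
      · push_cast
        apply Finset.sum_congr rfl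
        intro a _
        apply Finset.sum_congr rfl
        intro b _
        rcases Classical.em (a < b) with hab | hab
        · rw [dif_pos hab, dif_pos hab]; rfl
        · rw [dif_neg hab, dif_neg hab]; rfl
    rw [hX]
    refine Submodule.sum_mem S (fun a _ => Submodule.sum_mem S (fun b _ =>
      Submodule.smul_mem S _ ?_))
    by_cases hab : a < b
    · rw [dif_pos hab]
      exact hgenAll n a b hab (by have := b.isLt; omega)
    · rw [dif_neg hab]
      exact S.zero_mem
  exact ⟨Y, fun X => hspan X⟩
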